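/- Let f : ℝ^{d×r} → ℝ be twice continuously differentiable, γ ∈ ℝ, and define the merit function 𝓛(x) = f(x) − ½⟨sym(xᵀ∇f(x)), xᵀx − I_r⟩ + (γ/4)‖xᵀx − I_r‖²_F. Then for every x ∈ St(d,r), 𝓛 is differentiable at x and its Euclidean gradient equals ∇𝓛(x) = ∇f(x) − x·sym(xᵀ∇f(x)). -/

import Mathlib

open Matrix

attribute [local instance] Matrix.frobeniusNormedAddCommGroup Matrix.frobeniusNormedSpace

/-- Frobenius inner product `⟨A, B⟩ = Tr(A Bᵀ)`. -/
noncomputable def finner {m n : Type*} [Fintype m] [Fintype n]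
    (A B : Matrix m n ℝ) : ℝ := (A * Bᵀ).trace

/-- Symmetric part of a square matrix: `sym(A) = (A + Aᵀ)/2`. -/
noncomputable def msym {m : Type*} (A : Matrix m m ℝ) : Matrix m m ℝ :=
  ((1 : ℝ) / 2) • (A + Aᵀ)

section Aux

variable {E F G X : Type*}
  [NormedAddCommGroup E] [NormedSpace ℝ E]
  [NormedAddCommGroup F] [NormedSpace ℝ F]
  [NormedAddCommGroup G] [NormedSpace ℝ G]
  [NormedAddCommGroup X] [NormedSpace ℝ X]

/-- Upgrade a bilinear map on finite-dimensional spaces to a continuous bilinear map. -/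
noncomputable def bilinCLM [FiniteDimensional ℝ E] [FiniteDimensional ℝ F]
    (b : E →ₗ[ℝ] F →ₗ[ℝ] G) : E →L[ℝ] F →L[ℝ] G :=
  LinearMap.toContinuousLinearMap
    { toFun := fun e => LinearMap.toContinuousLinearMap (b e)
      map_add' := by intro a b'; ext w; simp
      map_smul' := by intro c a; ext w; simp }

@[simp] lemma bilinCLM_apply [FiniteDimensional ℝ E] [FiniteDimensional ℝ F]
    (b : E →ₗ[ℝ] F →ₗ[ℝ] G) (e : E) (f : F) : bilinCLM b e f = b e f := rfl

lemma hasFDerivAt_bilin [FiniteDimensional ℝ E] [FiniteDimensional ℝ F]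
    (b : E →ₗ[ℝ] F →ₗ[ℝ] G) {u : X → E} {v : X → F} {u' : X →L[ℝ] E} {v' : X →L[ℝ] F} {x : X}
    (hu : HasFDerivAt u u' x) (hv : HasFDerivAt v v' x) :
    HasFDerivAt (fun y => b (u y) (v y))
      ((bilinCLM b).precompR X (u x) v' + (bilinCLM b).precompL X u' (v x)) x :=
  (bilinCLM b).hasFDerivAt_of_bilinear hu hv

end Aux

section MatrixAux

variable {d r : ℕ}

/-- Matrix multiplication as a bilinear map. -/
noncomputable def mulLM (m n p : Type*) [Fintype m] [Fintype n] [Fintype p] :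
    Matrix m n ℝ →ₗ[ℝ] Matrix n p ℝ →ₗ[ℝ] Matrix m p ℝ :=
  LinearMap.mk₂ ℝ (· * ·) Matrix.add_mul (fun c A B => Matrix.smul_mul c A B)
    Matrix.mul_add (fun c A B => Matrix.mul_smul A c B)

/-- `finner` as a bilinear map. -/
noncomputable def finnerLM (m n : Type*) [Fintype m] [Fintype n] :
    Matrix m n ℝ →ₗ[ℝ] Matrix m n ℝ →ₗ[ℝ] ℝ :=
  LinearMap.mk₂ ℝ finner
    (fun A B C => by simp [finner, Matrix.add_mul, Matrix.trace_add])
    (fun c A B => by simp [finner, Matrix.smul_mul])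
    (fun A B C => by simp [finner, Matrix.transpose_add, Matrix.mul_add, Matrix.trace_add])
    (fun c A B => by simp [finner, Matrix.transpose_smul, Matrix.mul_smul])

/-- transpose as a linear map. -/
noncomputable def tLM (m n : Type*) : Matrix m n ℝ →ₗ[ℝ] Matrix n m ℝ where
  toFun := Matrix.transpose
  map_add' := Matrix.transpose_add
  map_smul' := Matrix.transpose_smul

lemma finner_stdBasisMatrix {m n : Type*} [Fintype m] [Fintype n] [DecidableEq m] [DecidableEq n]
    (A : Matrix m n ℝ) (i : m) (j : n) :
    finner A (Matrix.single i j 1) = A i j := by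
  simp [finner, Matrix.trace, Matrix.diag, Matrix.mul_apply, Matrix.single,
    Matrix.transpose_apply, ite_and, Finset.sum_ite_eq, Finset.sum_ite_eq']

lemma finner_sub {m n : Type*} [Fintype m] [Fintype n] (A B C : Matrix m n ℝ) :
    finner (A - B) C = finner A C - finner B C := by
  simp [finner, Matrix.sub_mul]

lemma norm_sq_eq_finner {m n : Type*} [Fintype m] [Fintype n] (A : Matrix m n ℝ) :
    ‖A‖ ^ 2 = finner A A := by
  rw [Matrix.frobenius_norm_def, ← Real.rpow_natCast _ 2, ← Real.rpow_mul
    (by positivity)]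
  norm_num
  simp [finner, Matrix.trace, Matrix.diag, Matrix.mul_apply, Matrix.transpose_apply,
    Real.rpow_natCast, sq_abs, pow_two]

lemma msym_transpose {m : Type*} (A : Matrix m m ℝ) : (msym A)ᵀ = msym A := by
  simp [msym, Matrix.transpose_smul, Matrix.transpose_add, add_comm]

lemma finner_key {d r : ℕ} (S : Matrix (Fin r) (Fin r) ℝ) (hS : Sᵀ = S)
    (x v : Matrix (Fin d) (Fin r) ℝ) :
    finner S (xᵀ * v) + finner S (vᵀ * x) = 2 * finner (x * S) v := by
  have h1 : finner S (xᵀ * v) = finner (x * S) v := by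
    simp only [finner, Matrix.transpose_mul, Matrix.transpose_transpose]
    rw [← Matrix.mul_assoc, Matrix.trace_mul_comm, ← Matrix.mul_assoc]
  have h2 : finner S (vᵀ * x) = finner (x * S) v := by
    simp only [finner, Matrix.transpose_mul, Matrix.transpose_transpose]
    rw [← Matrix.trace_transpose (S * (xᵀ * v))]
    simp only [Matrix.transpose_mul, Matrix.transpose_transpose, hS]
    rw [Matrix.mul_assoc, Matrix.trace_mul_comm]
  rw [h1, h2]; ring

end MatrixAux

set_option maxHeartbeats 1600000 in
/-- For `f` twice continuously differentiable and the merit function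
`𝓛(x) = f(x) - ½⟨sym(xᵀ∇f(x)), xᵀx - I_r⟩ + (γ/4)‖xᵀx - I_r‖²_F`, at every point `x` of the
Stiefel manifold, `𝓛` is differentiable and its Euclidean gradient is
`∇𝓛(x) = ∇f(x) - x · sym(xᵀ∇f(x))`. -/
theorem merit_gradient_on_Stiefel (d r : ℕ) (γ : ℝ)
    (f : Matrix (Fin d) (Fin r) ℝ → ℝ)
    (gradf : Matrix (Fin d) (Fin r) ℝ → Matrix (Fin d) (Fin r) ℝ)
    (hf : ContDiff ℝ 2 f)
    (hgrad : ∀ x v : Matrix (Fin d) (Fin r) ℝ, fderiv ℝ f x v = finner (gradf x) v)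
    (𝓛 : Matrix (Fin d) (Fin r) ℝ → ℝ)
    (h𝓛 : ∀ y, 𝓛 y = f y - (1 / 2 : ℝ) * finner (msym (yᵀ * gradf y)) (yᵀ * y - 1)
      + (γ / 4) * ‖yᵀ * y - 1‖ ^ 2)
    (x : Matrix (Fin d) (Fin r) ℝ) (hx : xᵀ * x = 1) :
    DifferentiableAt ℝ 𝓛 x ∧
    ∀ v : Matrix (Fin d) (Fin r) ℝ,
      fderiv ℝ 𝓛 x v = finner (gradf x - x * msym (xᵀ * gradf x)) v := by
  classical
  have hfd : Differentiable ℝ (fun y => fderiv ℝ f y) :=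
    (hf.fderiv_right (m := 1) (by norm_num)).differentiable one_ne_zero
  have hgradf_eq : gradf = fun y => ∑ i, ∑ j,
      (fderiv ℝ f y (Matrix.single i j 1)) • Matrix.single i j 1 := by
    funext y
    conv_lhs => rw [Matrix.matrix_eq_sum_single (gradf y)]
    refine Finset.sum_congr rfl fun i _ => Finset.sum_congr rfl fun j _ => ?_
    rw [Matrix.smul_single, smul_eq_mul, mul_one, hgrad, finner_stdBasisMatrix]
  have hGf : DifferentiableAt ℝ gradf x := by
    rw [hgradf_eq]
    apply DifferentiableAt.fun_sum
    intro i _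
    apply DifferentiableAt.fun_sum
    intro j _
    exact ((hfd x).clm_apply (differentiableAt_const _)).smul_const _
  -- transpose continuous linear maps
  let T : Matrix (Fin d) (Fin r) ℝ →L[ℝ] Matrix (Fin r) (Fin d) ℝ :=
    LinearMap.toContinuousLinearMap (tLM (Fin d) (Fin r))
  let Tr : Matrix (Fin r) (Fin r) ℝ →L[ℝ] Matrix (Fin r) (Fin r) ℝ :=
    LinearMap.toContinuousLinearMap (tLM (Fin r) (Fin r))
  have hT : HasFDerivAt (fun y : Matrix (Fin d) (Fin r) ℝ => yᵀ) T x := T.hasFDerivAt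
  set b2 := mulLM (Fin r) (Fin d) (Fin r) with hb2
  set bf := finnerLM (Fin r) (Fin r) with hbf
  -- derivative of K y = yᵀ * y - 1
  set K' : Matrix (Fin d) (Fin r) ℝ →L[ℝ] Matrix (Fin r) (Fin r) ℝ :=
    (bilinCLM b2).precompR _ (xᵀ) (ContinuousLinearMap.id ℝ _)
      + (bilinCLM b2).precompL _ T x with hK'def
  have hK : HasFDerivAt (fun y : Matrix (Fin d) (Fin r) ℝ => yᵀ * y - 1) K' x := by
    have h0 : HasFDerivAt (fun y : Matrix (Fin d) (Fin r) ℝ => yᵀ * y) K' x :=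
      hasFDerivAt_bilin b2 hT (hasFDerivAt_id x)
    exact h0.sub_const 1
  have hK'app : ∀ v, K' v = xᵀ * v + vᵀ * x := by
    intro v
    rfl
  -- G y = msym (yᵀ * gradf y) is differentiable at x
  have hmul2 : DifferentiableAt ℝ (fun y : Matrix (Fin d) (Fin r) ℝ => yᵀ * gradf y) x :=
    (hasFDerivAt_bilin b2 hT hGf.hasFDerivAt).differentiableAt
  have hG : DifferentiableAt ℝ (fun y : Matrix (Fin d) (Fin r) ℝ => msym (yᵀ * gradf y)) x := by
    simp only [msym]
    exact (hmul2.fun_add ((Tr.differentiableAt).comp x hmul2)).fun_const_smul _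
  set G' := fderiv ℝ (fun y : Matrix (Fin d) (Fin r) ℝ => msym (yᵀ * gradf y)) x with hG'
  -- term 2
  set D2 : Matrix (Fin d) (Fin r) ℝ →L[ℝ] ℝ :=
    (bilinCLM bf).precompR _ (msym (xᵀ * gradf x)) K'
      + (bilinCLM bf).precompL _ G' (xᵀ * x - 1) with hD2
  have hH2 : HasFDerivAt
      (fun y : Matrix (Fin d) (Fin r) ℝ => finner (msym (yᵀ * gradf y)) (yᵀ * y - 1)) D2 x :=
    hasFDerivAt_bilin bf hG.hasFDerivAt hK
  -- term 3
  set D3 : Matrix (Fin d) (Fin r) ℝ →L[ℝ] ℝ :=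
    (bilinCLM bf).precompR _ (xᵀ * x - 1) K'
      + (bilinCLM bf).precompL _ K' (xᵀ * x - 1) with hD3
  have hH3 : HasFDerivAt
      (fun y : Matrix (Fin d) (Fin r) ℝ => ‖yᵀ * y - 1‖ ^ 2) D3 x := by
    have heq : (fun y : Matrix (Fin d) (Fin r) ℝ => ‖yᵀ * y - 1‖ ^ 2)
        = fun y => finner (yᵀ * y - 1) (yᵀ * y - 1) := funext fun y => norm_sq_eq_finner _
    rw [heq]
    exact hasFDerivAt_bilin bf hK hK
  have hf' : HasFDerivAt f (fderiv ℝ f x) x :=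
    ((hf.differentiable (by norm_num)) x).hasFDerivAt
  have h𝓛' : 𝓛 = fun y => f y - (1 / 2 : ℝ) * finner (msym (yᵀ * gradf y)) (yᵀ * y - 1)
      + (γ / 4) * ‖yᵀ * y - 1‖ ^ 2 := funext h𝓛
  have hTot : HasFDerivAt 𝓛
      (fderiv ℝ f x - (1 / 2 : ℝ) • D2 + (γ / 4) • D3) x := by
    rw [h𝓛']
    exact (hf'.sub (hH2.const_mul _)).add (hH3.const_mul _)
  refine ⟨hTot.differentiableAt, fun v => ?_⟩
  rw [hTot.fderiv]
  have hKx : xᵀ * x - 1 = (0 : Matrix (Fin r) (Fin r) ℝ) := by rw [hx]; simp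
  have hfz : ∀ A : Matrix (Fin r) (Fin r) ℝ, finner A (0 : Matrix (Fin r) (Fin r) ℝ) = 0 := by
    intro A; simp [finner]
  have hfz' : ∀ A : Matrix (Fin r) (Fin r) ℝ, finner (0 : Matrix (Fin r) (Fin r) ℝ) A = 0 := by
    intro A; simp [finner]
  have hadd : ∀ A B C : Matrix (Fin r) (Fin r) ℝ, finner A (B + C) = finner A B + finner A C := by
    intro A B C; simp [finner, Matrix.transpose_add, Matrix.mul_add, Matrix.trace_add]
  have key := finner_key (msym (xᵀ * gradf x)) (msym_transpose _) x v
  have hD2v : D2 v = finner (msym (xᵀ * gradf x)) (K' v) + finner (G' v) (xᵀ * x - 1) := rfl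
  have hD3v : D3 v = finner (xᵀ * x - 1) (K' v) + finner (K' v) (xᵀ * x - 1) := rfl
  have hTv : (fderiv ℝ f x - (1 / 2 : ℝ) • D2 + (γ / 4) • D3) v
      = fderiv ℝ f x v - (1 / 2 : ℝ) * D2 v + (γ / 4) * D3 v := rfl
  rw [hTv, hD2v, hD3v]
  simp only [ContinuousLinearMap.add_apply, ContinuousLinearMap.coe_sub', Pi.sub_apply,
    ContinuousLinearMap.coe_smul', Pi.smul_apply, hD2, hD3, ContinuousLinearMap.precompR_apply,
    ContinuousLinearMap.precompL_apply, bilinCLM_apply, hbf, finnerLM, LinearMap.mk₂_apply,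
    hKx, hfz, hfz', smul_eq_mul, hgrad, hK'app, hadd, finner_sub,
    ContinuousLinearMap.compL_apply, ContinuousLinearMap.coe_comp', Function.comp_apply]
  ring_nf
  nlinarith [key, finner_key (msym (xᵀ * gradf x)) (msym_transpose _) x v]
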